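/- Fix m, ℓ ≥ 1. Let H be any graph of the following form: there is a vertex i, m paths P_1, …, P_m of length ℓ from i to m distinct vertices j_1, …, j_m that are pairwise vertex-disjoint except for the common endpoint i, and for each k ∈ {1,…,m} a path P̃_k of length at most ℓ−1 from i to j_k; and H = ∪_{k=1}^m (P_k ∪ P̃_k). Then |E(H)| ≥ |V(H)| + m − 1. -/

import Mathlib

open Finset in
private lemma mx_telescope {M : Type*} [AddCommGroup M] :
    ∀ (n : ℕ) (h : Fin (n + 1) → M),
      ∑ t : Fin n, (h t.succ - h t.castSucc) = h (Fin.last n) - h 0 := by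
  intro n
  induction n with
  | zero => intro h; simp
  | succ n ih =>
    intro h
    rw [Fin.sum_univ_castSucc]
    have h1 := ih (fun t => h t.castSucc)
    simp only [Fin.succ_castSucc] at h1 ⊢
    rw [h1, Fin.castSucc_zero, ← Fin.succ_last]
    abel



open Filter

/-- **Lemma 5 (Mossel–Xu).** Let `H = ∪_{k=1}^m (P_k ∪ P̃_k)` where
`P_1, …, P_m` are `m` paths of length `ℓ` from a common vertex `i` to `m`
distinct vertices `j_1, …, j_m`, pairwise vertex-disjoint except at `i`, and
each `P̃_k` is a path of length at most `ℓ - 1` from `i` to `j_k`. Then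
`|E(H)| ≥ |V(H)| + m - 1`. -/
theorem edge_count_ge_vertex_count_add
    {V : Type*} (m ℓ : ℕ) (hm : 1 ≤ m) (hℓ : 1 ≤ ℓ)
    (i : V) (j : Fin m → V) (hj : Function.Injective j)
    -- the long paths `P_k`
    (P : Fin m → Fin (ℓ + 1) → V)
    (hPinj : ∀ k, Function.Injective (P k))
    (hPstart : ∀ k, P k 0 = i)
    (hPend : ∀ k, P k (Fin.last ℓ) = j k)
    (hPdisj : ∀ a b, a ≠ b → ∀ t t' : Fin (ℓ + 1), P a t = P b t' → P a t = i)
    -- the short paths `P̃_k`, of lengths `L k ≤ ℓ - 1`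
    (L : Fin m → ℕ) (hL : ∀ k, L k ≤ ℓ - 1)
    (Pt : (k : Fin m) → Fin (L k + 1) → V)
    (hPtinj : ∀ k, Function.Injective (Pt k))
    (hPtstart : ∀ k, Pt k 0 = i)
    (hPtend : ∀ k, Pt k (Fin.last (L k)) = j k)
    -- the union graph `H` and its vertex set
    (E : Set (Sym2 V))
    (hE : E = (⋃ k, ⋃ t : Fin ℓ, {s(P k t.castSucc, P k t.succ)}) ∪
              (⋃ k, ⋃ t : Fin (L k), {s(Pt k t.castSucc, Pt k t.succ)}))
    (VH : Set V)
    (hVH : VH = (⋃ k, Set.range (P k)) ∪ (⋃ k, Set.range (Pt k))) :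
    VH.ncard + m - 1 ≤ (SimpleGraph.fromEdgeSet E).edgeSet.ncard := by
    classical
  -- finiteness
  have hEfin : E.Finite := by
    rw [hE]
    exact (Set.finite_iUnion fun k => Set.finite_iUnion fun t => Set.finite_singleton _).union
      (Set.finite_iUnion fun k => Set.finite_iUnion fun t => Set.finite_singleton _)
  have hVfin : VH.Finite := by
    rw [hVH]
    exact (Set.finite_iUnion fun k => Set.finite_range _).union
      (Set.finite_iUnion fun k => Set.finite_range _)
  haveI : Fintype ↥E := hEfin.fintype
  haveI : Fintype ↥(VH \ {i}) := (hVfin.diff (t := {i})).fintype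
  -- edges are not diagonal
  have hmemP : ∀ (k : Fin m) (t : Fin ℓ), s(P k t.castSucc, P k t.succ) ∈ E := by
    intro k t; rw [hE]
    exact Or.inl (Set.mem_iUnion.2 ⟨k, Set.mem_iUnion.2 ⟨t, rfl⟩⟩)
  have hmemPt : ∀ (k : Fin m) (t : Fin (L k)), s(Pt k t.castSucc, Pt k t.succ) ∈ E := by
    intro k t; rw [hE]
    exact Or.inr (Set.mem_iUnion.2 ⟨k, Set.mem_iUnion.2 ⟨t, rfl⟩⟩)
  have hcs : ∀ {n : ℕ} (t : Fin n), (t.castSucc : Fin (n+1)) ≠ t.succ := by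
    intro n t h
    have := congrArg Fin.val h
    simp at this
  have hedge : (SimpleGraph.fromEdgeSet E).edgeSet = E := by
    rw [SimpleGraph.edgeSet_fromEdgeSet]
    apply sdiff_eq_self_iff_disjoint.2
    rw [Set.disjoint_left]
    intro e hd he
    rw [hE] at he
    rcases he with he | he <;>
    · simp only [Set.mem_iUnion, Set.mem_singleton_iff] at he
      obtain ⟨k, t, rfl⟩ := he
      simp only [Set.mem_setOf_eq, Sym2.mem_diagSet, Sym2.mk_isDiag_iff] at hd
      first
      | exact hcs t (hPinj k hd)
      | exact hcs t (hPtinj k hd)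
  rw [hedge]
  -- linear algebra setup
  set delta : V → (V → ZMod 2) := fun v w => if w = v then 1 else 0 with hdelta
  set bd : Sym2 V → (V → ZMod 2) :=
    Sym2.lift ⟨fun a b => delta a + delta b, fun a b => add_comm _ _⟩ with hbd
  have hbdmk : ∀ a b : V, bd s(a, b) = delta a + delta b := fun a b => rfl
  set bdl : (↥E → ZMod 2) →ₗ[ZMod 2] (V → ZMod 2) :=
    { toFun := fun f => ∑ e : ↥E, f e • bd e.1
      map_add' := by intro f g; simp [add_smul, Finset.sum_add_distrib]
      map_smul' := by intro c f; simp [smul_smul, Finset.smul_sum] } with hbdl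
  set std : ↥E → (↥E → ZMod 2) := fun e e' => if e' = e then 1 else 0 with hstd
  have hbdstd : ∀ e : ↥E, bdl (std e) = bd e.1 := by
    intro e
    show (∑ e' : ↥E, (if e' = e then (1 : ZMod 2) else 0) • bd e'.1) = bd e.1
    simp [ite_smul]
  -- edges as elements of E
  set legE : (k : Fin m) → Fin ℓ → ↥E := fun k t => ⟨_, hmemP k t⟩ with hlegE
  set tedE : (k : Fin m) → Fin (L k) → ↥E := fun k t => ⟨_, hmemPt k t⟩ with htedE
  have hlegval : ∀ k t, (legE k t).1 = s(P k t.castSucc, P k t.succ) := fun _ _ => rfl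
  have htedval : ∀ k t, (tedE k t).1 = s(Pt k t.castSucc, Pt k t.succ) := fun _ _ => rfl
  set c : Fin m → (↥E → ZMod 2) := fun k => (∑ t, std (legE k t)) + (∑ s, std (tedE k s)) with hc
  have hneg : ∀ x : V → ZMod 2, -x = x := fun x => funext fun w => by
    have h2 : ∀ u : ZMod 2, -u = u := by decide
    exact h2 (x w)
  have hself : ∀ x : V → ZMod 2, x + x = 0 := fun x => funext fun w => by
    have h2 : ∀ u : ZMod 2, u + u = 0 := by decide
    exact h2 (x w)
  have hpath : ∀ (n : ℕ) (Q : Fin (n+1) → V),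
      ∑ t : Fin n, bd s(Q t.castSucc, Q t.succ) = delta (Q (Fin.last n)) + delta (Q 0) := by
    intro n Q
    have h1 : ∀ t : Fin n, bd s(Q t.castSucc, Q t.succ)
        = delta (Q t.succ) - delta (Q t.castSucc) := by
      intro t
      rw [hbdmk, sub_eq_add_neg, hneg, add_comm]
    rw [Finset.sum_congr rfl (fun t _ => h1 t), mx_telescope n (fun t => delta (Q t)),
      sub_eq_add_neg, hneg]
  have hker : ∀ k, bdl (c k) = 0 := by
    intro k
    rw [hc]
    simp only [map_add, map_sum, hbdstd, hlegval, htedval]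
    rw [hpath ℓ (P k), hpath (L k) (Pt k), hPend k, hPstart k, hPtend k, hPtstart k]
    exact hself _
  -- injectivity of leg edges
  have legInj : ∀ (k k' : Fin m) (t t' : Fin ℓ), legE k t = legE k' t' → k = k' ∧ t = t' := by
    intro k k' t t' h
    have h' : s(P k t.castSucc, P k t.succ) = s(P k' t'.castSucc, P k' t'.succ) :=
      congrArg Subtype.val h
    rw [Sym2.eq_iff] at h'
    by_cases hk : k = k'
    · subst hk
      refine ⟨rfl, ?_⟩
      rcases h' with ⟨h1, h2⟩ | ⟨h1, h2⟩
      · have := hPinj k h1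
        simpa [Fin.ext_iff] using this
      · have e1 := hPinj k h1
        have e2 := hPinj k h2
        simp only [Fin.ext_iff, Fin.val_succ, Fin.coe_castSucc] at e1 e2
        omega
    · exfalso
      rcases h' with ⟨h1, h2⟩ | ⟨h1, h2⟩ <;>
      · have e1 := hPdisj k k' hk _ _ h1
        have e2 := hPdisj k k' hk _ _ h2
        have := hPinj k (e1.trans e2.symm)
        exact hcs _ this
  have hselfE : ∀ x : ↥E → ZMod 2, x + x = 0 := fun x => funext fun w => by
    have h2 : ∀ u : ZMod 2, u + u = 0 := by decide
    exact h2 (x w)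
  have hz : ∀ x : ZMod 2, x = 0 ∨ x = 1 := by decide
  -- linear independence of the cycle vectors
  have hli : LinearIndependent (ZMod 2) c := by
    rw [Fintype.linearIndependent_iff]
    intro g hg
    by_contra hko
    push_neg at hko
    obtain ⟨k0, hk0⟩ := hko
    set S : Finset (Fin m) := Finset.univ.filter (fun k => g k ≠ 0) with hS
    have hk0S : k0 ∈ S := by simp [hS, hk0]
    have hSsum : ∑ k ∈ S, c k = 0 := by
      have he : ∀ k ∈ Finset.univ, (if g k ≠ 0 then c k else 0) = g k • c k := by
        intro k _
        rcases hz (g k) with h | h <;> simp [h]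
      rw [hS, Finset.sum_filter, Finset.sum_congr rfl he, hg]
    set A : ↥E → ZMod 2 := ∑ k ∈ S, ∑ t : Fin ℓ, std (legE k t) with hA
    set B : ↥E → ZMod 2 := ∑ k ∈ S, ∑ s : Fin (L k), std (tedE k s) with hB
    have hABsum : A + B = 0 := by
      rw [hA, hB, ← Finset.sum_add_distrib]
      exact hSsum
    have hAB : A = B := by
      calc A = A + (B + B) := by rw [hselfE B, add_zero]
        _ = (A + B) + B := by rw [add_assoc]
        _ = B := by rw [hABsum, zero_add]
    have hAval : ∀ k ∈ S, ∀ t : Fin ℓ, A (legE k t) = 1 := by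
      intro k hk t
      rw [hA, Finset.sum_apply]
      have h1 : ∀ k' ∈ S, (∑ t' : Fin ℓ, std (legE k' t')) (legE k t)
          = if k' = k then 1 else 0 := by
        intro k' _
        rw [Finset.sum_apply]
        have h2 : ∀ t' : Fin ℓ, std (legE k' t') (legE k t)
            = if k' = k ∧ t' = t then 1 else 0 := by
          intro t'
          by_cases h : legE k t = legE k' t'
          · obtain ⟨rfl, rfl⟩ := legInj _ _ _ _ h
            simp [hstd]
          · have hne : ¬(k' = k ∧ t' = t) := by
              rintro ⟨rfl, rfl⟩
              exact h rfl
            simp [hstd, h, hne]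
        rw [Finset.sum_congr rfl (fun t' _ => h2 t')]
        by_cases h : k' = k
        · subst h; simp
        · simp [h]
      rw [Finset.sum_congr rfl h1, Finset.sum_ite_eq' S k (fun _ => (1 : ZMod 2)), if_pos hk]
    -- support counting
    set supp : Finset ↥E := Finset.univ.filter (fun e => A e ≠ 0) with hsupp
    have hlow : S.card * ℓ ≤ supp.card := by
      have himg : (S ×ˢ (Finset.univ : Finset (Fin ℓ))).image (fun p => legE p.1 p.2) ⊆ supp := by
        intro e he
        simp only [Finset.mem_image, Finset.mem_product] at he
        obtain ⟨⟨k, t⟩, ⟨hkS, -⟩, rfl⟩ := he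
        simp only [hsupp, Finset.mem_filter, Finset.mem_univ, true_and]
        rw [hAval k hkS t]
        decide
      have hinj : Set.InjOn (fun p : Fin m × Fin ℓ => legE p.1 p.2)
          ↑(S ×ˢ (Finset.univ : Finset (Fin ℓ))) := by
        rintro ⟨k, t⟩ - ⟨k', t'⟩ - h
        obtain ⟨rfl, rfl⟩ := legInj _ _ _ _ h
        rfl
      calc S.card * ℓ = (S ×ˢ (Finset.univ : Finset (Fin ℓ))).card := by
            rw [Finset.card_product, Finset.card_univ, Fintype.card_fin]
        _ = ((S ×ˢ (Finset.univ : Finset (Fin ℓ))).image (fun p => legE p.1 p.2)).card :=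
            (Finset.card_image_of_injOn hinj).symm
        _ ≤ supp.card := Finset.card_le_card himg
    have hhigh : supp.card ≤ S.card * (ℓ - 1) := by
      have hsubB : supp ⊆ S.biUnion (fun k => Finset.univ.image (tedE k)) := by
        intro e he
        simp only [hsupp, Finset.mem_filter, Finset.mem_univ, true_and] at he
        by_contra henot
        apply he
        rw [hAB, hB, Finset.sum_apply]
        apply Finset.sum_eq_zero
        intro k hkS
        rw [Finset.sum_apply]
        apply Finset.sum_eq_zero
        intro t _
        show (if e = tedE k t then (1 : ZMod 2) else 0) = 0
        rw [if_neg]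
        intro het
        apply henot
        simp only [Finset.mem_biUnion, Finset.mem_image, Finset.mem_univ, true_and]
        exact ⟨k, hkS, t, het.symm⟩
      calc supp.card ≤ (S.biUnion (fun k => Finset.univ.image (tedE k))).card :=
            Finset.card_le_card hsubB
        _ ≤ ∑ k ∈ S, (Finset.univ.image (tedE k)).card := Finset.card_biUnion_le
        _ ≤ ∑ k ∈ S, (ℓ - 1) := by
            apply Finset.sum_le_sum
            intro k _
            calc (Finset.univ.image (tedE k)).card ≤ (Finset.univ : Finset (Fin (L k))).card :=
                  Finset.card_image_le
              _ = L k := by rw [Finset.card_univ, Fintype.card_fin]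
              _ ≤ ℓ - 1 := hL k
        _ = S.card * (ℓ - 1) := by rw [Finset.sum_const, smul_eq_mul]
    have hpos : 0 < S.card := Finset.card_pos.2 ⟨k0, hk0S⟩
    have : ℓ ≤ ℓ - 1 := Nat.le_of_mul_le_mul_left (hlow.trans hhigh) hpos
    omega
  -- kernel dimension ≥ m
  have hcker : ∀ k, c k ∈ LinearMap.ker bdl := fun k => LinearMap.mem_ker.2 (hker k)
  have hkerdim : m ≤ Module.finrank (ZMod 2) ↥(LinearMap.ker bdl) := by
    have hliK : LinearIndependent (ZMod 2)
        (fun k : Fin m => (⟨c k, hcker k⟩ : ↥(LinearMap.ker bdl))) := by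
      apply LinearIndependent.of_comp (LinearMap.ker bdl).subtype
      exact hli
    simpa using hliK.fintype_card_le_finrank
  -- range membership
  have hbdrange : ∀ e : ↥E, bd e.1 ∈ LinearMap.range bdl := fun e => ⟨std e, hbdstd e⟩
  have hchar3 : ∀ a b cc : ZMod 2, (a + b) + (a + cc) = b + cc := by decide
  have hrange : ∀ v ∈ VH, delta v + delta i ∈ LinearMap.range bdl := by
    intro v hv
    rw [hVH] at hv
    rcases hv with hv | hv <;> simp only [Set.mem_iUnion, Set.mem_range] at hv
    · obtain ⟨k, t, rfl⟩ := hv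
      induction t using Fin.induction with
      | zero =>
        rw [hPstart k, hself (delta i)]
        exact (LinearMap.range bdl).zero_mem
      | succ t ih =>
        have h1 : bd s(P k t.castSucc, P k t.succ) ∈ LinearMap.range bdl := hbdrange (legE k t)
        have h2 := (LinearMap.range bdl).add_mem h1 ih
        have heq : bd s(P k t.castSucc, P k t.succ) + (delta (P k t.castSucc) + delta i)
            = delta (P k t.succ) + delta i := by
          rw [hbdmk]
          funext w
          simp only [Pi.add_apply]
          exact hchar3 _ _ _
        rwa [heq] at h2
    · obtain ⟨k, t, rfl⟩ := hv
      induction t using Fin.induction with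
      | zero =>
        rw [hPtstart k, hself (delta i)]
        exact (LinearMap.range bdl).zero_mem
      | succ t ih =>
        have h1 : bd s(Pt k t.castSucc, Pt k t.succ) ∈ LinearMap.range bdl := hbdrange (tedE k t)
        have h2 := (LinearMap.range bdl).add_mem h1 ih
        have heq : bd s(Pt k t.castSucc, Pt k t.succ) + (delta (Pt k t.castSucc) + delta i)
            = delta (Pt k t.succ) + delta i := by
          rw [hbdmk]
          funext w
          simp only [Pi.add_apply]
          exact hchar3 _ _ _
        rwa [heq] at h2
  -- the range vectors are independent
  set r : ↥(VH \ {i}) → (V → ZMod 2) := fun v => delta v.1 + delta i with hr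
  have hrli : LinearIndependent (ZMod 2) r := by
    rw [Fintype.linearIndependent_iff]
    intro g hg v0
    have hv0i : v0.1 ≠ i := by
      have := v0.2.2
      simpa using this
    have hterm : ∀ v : ↥(VH \ {i}), g v • r v v0.1 = if v = v0 then g v else 0 := by
      intro v
      rw [hr]
      simp only [Pi.add_apply, smul_eq_mul]
      by_cases hv : v = v0
      · subst hv
        rw [if_pos rfl, hdelta]
        simp [hv0i]
      · rw [if_neg hv, hdelta]
        have hne : v0.1 ≠ v.1 := fun h => hv (Subtype.ext h.symm)
        simp [hne, hv0i]
    have := congrFun hg v0.1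
    simp only [Finset.sum_apply, Pi.smul_apply, Pi.zero_apply] at this
    rw [Finset.sum_congr rfl (fun v _ => hterm v), Finset.sum_ite_eq' Finset.univ v0 g,
      if_pos (Finset.mem_univ v0)] at this
    exact this
  have hrangedim : Fintype.card ↥(VH \ {i}) ≤ Module.finrank (ZMod 2) ↥(LinearMap.range bdl) := by
    have hliR : LinearIndependent (ZMod 2)
        (fun v : ↥(VH \ {i}) => (⟨r v, hrange v.1 v.2.1⟩ : ↥(LinearMap.range bdl))) := by
      apply LinearIndependent.of_comp (LinearMap.range bdl).subtype
      exact hrli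
    exact hliR.fintype_card_le_finrank
  -- counting
  have hi : i ∈ VH := by
    rw [hVH]
    exact Or.inl (Set.mem_iUnion.2 ⟨⟨0, hm⟩, ⟨0, hPstart _⟩⟩)
  have hVpos : 1 ≤ VH.ncard := by
    have := Set.ncard_pos hVfin
    exact this.2 ⟨i, hi⟩
  have hcard1 : Fintype.card ↥(VH \ {i}) = VH.ncard - 1 := by
    rw [← Nat.card_eq_fintype_card, Nat.card_coe_set_eq,
      Set.ncard_diff_singleton_of_mem hi]
  have hEcard : Module.finrank (ZMod 2) (↥E → ZMod 2) = E.ncard := by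
    rw [Module.finrank_pi, ← Nat.card_coe_set_eq, Nat.card_eq_fintype_card]
  have hrn := LinearMap.finrank_range_add_finrank_ker bdl
  rw [hEcard] at hrn
  rw [hcard1] at hrangedim
  omega
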